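/- For every non-integer real $\rho\ge 1$, every integer $n\ge 2\rho+1$, and $i=\lfloor\rho\rfloor+2$, one has $\Gamma(n+1)/(\Gamma(i)\,\Gamma(n-\rho+1)) < e^{\rho+1}\,(n/i)^{\rho}$. -/

import Mathlib

open Real

/-- Wendel: `Γ(x+s) ≤ Γ(x) * x^s` for `x > 0`, `s ∈ [0,1]`. -/
lemma wendel_aux (x s : ℝ) (hx : 0 < x) (hs0 : 0 ≤ s) (hs1 : s ≤ 1) :
    Real.Gamma (x + s) ≤ Real.Gamma x * x ^ s := by
  have hx1 : (0:ℝ) < x + 1 := by linarith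
  have h := Real.convexOn_log_Gamma.2 (Set.mem_Ioi.mpr hx) (Set.mem_Ioi.mpr hx1)
    (by linarith : (0:ℝ) ≤ 1 - s) hs0 (by ring)
  simp only [smul_eq_mul, Function.comp_apply] at h
  have hxe : (1 - s) * x + s * (x + 1) = x + s := by ring
  rw [hxe] at h
  have hΓx : 0 < Real.Gamma x := Real.Gamma_pos_of_pos hx
  have hΓxs : 0 < Real.Gamma (x + s) := Real.Gamma_pos_of_pos (by linarith)
  have hlog1 : Real.log (Real.Gamma (x + 1)) = Real.log x + Real.log (Real.Gamma x) := by
    rw [Real.Gamma_add_one (ne_of_gt hx), Real.log_mul (ne_of_gt hx) (ne_of_gt hΓx)]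
  rw [hlog1] at h
  have h2 : Real.log (Real.Gamma (x + s)) ≤ Real.log (Real.Gamma x) + s * Real.log x := by
    nlinarith
  calc Real.Gamma (x + s) = Real.exp (Real.log (Real.Gamma (x + s))) := (Real.exp_log hΓxs).symm
    _ ≤ Real.exp (Real.log (Real.Gamma x) + s * Real.log x) := Real.exp_le_exp.mpr h2
    _ = Real.Gamma x * x ^ s := by
        rw [Real.exp_add, Real.exp_log hΓx, Real.rpow_def_of_pos hx]
        ring_nf

/-- `(m+1)^(m+1) ≤ e^m * (m+1)!`. -/
lemma fact_lb (m : ℕ) : ((m + 1 : ℕ) : ℝ) ^ (m + 1) ≤ Real.exp m * (Nat.factorial (m + 1) : ℝ) := by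
  induction m with
  | zero => simp
  | succ m ih =>
    have hm1 : (0:ℝ) < (m : ℝ) + 1 := by positivity
    have h1 : ((m + 2 : ℕ) : ℝ) ≤ ((m : ℝ) + 1) * Real.exp (1 / ((m : ℝ) + 1)) := by
      have := Real.add_one_le_exp (1 / ((m : ℝ) + 1))
      push_cast
      calc (m : ℝ) + 2 = ((m : ℝ) + 1) * (1 / ((m : ℝ) + 1) + 1) := by field_simp; ring
        _ ≤ ((m : ℝ) + 1) * Real.exp (1 / ((m : ℝ) + 1)) := by
            apply mul_le_mul_of_nonneg_left this (by positivity)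
    have h2 : ((m + 2 : ℕ) : ℝ) ^ (m + 1) ≤ ((m : ℝ) + 1) ^ (m + 1) * Real.exp 1 := by
      calc ((m + 2 : ℕ) : ℝ) ^ (m + 1)
          ≤ (((m : ℝ) + 1) * Real.exp (1 / ((m : ℝ) + 1))) ^ (m + 1) := by
            apply pow_le_pow_left₀ (by positivity) h1
        _ = ((m : ℝ) + 1) ^ (m + 1) * Real.exp (1 / ((m : ℝ) + 1)) ^ (m + 1) := mul_pow _ _ _
        _ = ((m : ℝ) + 1) ^ (m + 1) * Real.exp 1 := by
            rw [← Real.exp_nat_mul]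
            congr 1
            field_simp
            rw [Nat.cast_add_one, div_self (ne_of_gt hm1)]
    calc ((m + 2 : ℕ) : ℝ) ^ (m + 2)
        = ((m + 2 : ℕ) : ℝ) * ((m + 2 : ℕ) : ℝ) ^ (m + 1) := by ring
      _ ≤ ((m + 2 : ℕ) : ℝ) * (((m : ℝ) + 1) ^ (m + 1) * Real.exp 1) := by
          apply mul_le_mul_of_nonneg_left h2 (by positivity)
      _ ≤ ((m + 2 : ℕ) : ℝ) * ((Real.exp m * (Nat.factorial (m + 1) : ℝ)) * Real.exp 1) := by
          apply mul_le_mul_of_nonneg_left _ (by positivity)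
          apply mul_le_mul_of_nonneg_right _ (Real.exp_pos 1).le
          have : ((m + 1 : ℕ) : ℝ) ^ (m + 1) = ((m : ℝ) + 1) ^ (m + 1) := by push_cast; ring
          rw [← this]; exact ih
      _ = Real.exp ((m : ℝ) + 1) * (Nat.factorial (m + 2) : ℝ) := by
          rw [Nat.factorial_succ (m + 1)]
          push_cast
          rw [Real.exp_add]
          ring
      _ = Real.exp ((m + 1 : ℕ) : ℝ) * (Nat.factorial (m + 1 + 1) : ℝ) := by push_cast; ring

theorem stmt_13 (ρ : ℝ) (h1 : 1 ≤ ρ) (hni : ¬∃ m : ℤ, (m : ℝ) = ρ)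
    (n : ℕ) (hn : 2 * ρ + 1 ≤ (n : ℝ)) :
    Real.Gamma ((n : ℝ) + 1) /
        (Real.Gamma ((⌊ρ⌋₊ : ℝ) + 2) * Real.Gamma ((n : ℝ) - ρ + 1)) <
      Real.exp (ρ + 1) * ((n : ℝ) / ((⌊ρ⌋₊ : ℝ) + 2)) ^ ρ := by
  set k := ⌊ρ⌋₊ with hk
  have hkρ : (k : ℝ) ≤ ρ := Nat.floor_le (by linarith)
  have hρk1 : ρ < (k : ℝ) + 1 := Nat.lt_floor_add_one ρ
  have hkne : (k : ℝ) ≠ ρ := fun h => hni ⟨k, by exact_mod_cast h⟩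
  set s := ρ - (k : ℝ) with hs
  have hs0 : 0 < s := lt_of_le_of_ne (by linarith) (by simpa [hs, sub_eq_zero, eq_comm] using hkne)
  have hs1 : s < 1 := by simp only [hs]; linarith
  have hρeq : ρ = s + (k : ℝ) := by ring
  set x := (n : ℝ) - ρ + 1 with hx
  have hxpos : 0 < x := by simp only [hx]; linarith
  have hxn : x ≤ (n : ℝ) := by simp only [hx]; linarith
  have hnpos : (0:ℝ) < (n : ℝ) := by linarith
  -- key: Γ(x + s + j) ≤ n^(s+j) Γ(x) for j ≤ k
  have key : ∀ j : ℕ, j ≤ k →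
      Real.Gamma (x + (s + (j : ℝ))) ≤ (n : ℝ) ^ (s + (j : ℝ)) * Real.Gamma x := by
    intro j hj
    induction j with
    | zero =>
      simp only [Nat.cast_zero, add_zero]
      calc Real.Gamma (x + s) ≤ Real.Gamma x * x ^ s :=
            wendel_aux x s hxpos hs0.le hs1.le
        _ ≤ (n : ℝ) ^ s * Real.Gamma x := by
            rw [mul_comm]
            apply mul_le_mul_of_nonneg_right _ (Real.Gamma_pos_of_pos hxpos).le
            exact Real.rpow_le_rpow hxpos.le hxn hs0.le
    | succ j ih =>
      have hj' : j ≤ k := Nat.le_of_succ_le hj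
      have hyn : x + s + (j : ℝ) ≤ (n : ℝ) := by
        have : ((j : ℝ)) + 1 ≤ (k : ℝ) := by exact_mod_cast hj
        simp only [hx, hs]; linarith
      have hypos : 0 < x + s + (j : ℝ) := by positivity
      have heq : x + (s + ((j + 1 : ℕ) : ℝ)) = (x + s + (j : ℝ)) + 1 := by push_cast; ring
      rw [heq, Real.Gamma_add_one (ne_of_gt hypos)]
      have ih' : Real.Gamma (x + s + (j : ℝ)) ≤ (n : ℝ) ^ (s + (j : ℝ)) * Real.Gamma x := by
        rw [add_assoc]; exact ih hj'
      calc (x + s + (j : ℝ)) * Real.Gamma (x + s + (j : ℝ))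
          ≤ (n : ℝ) * ((n : ℝ) ^ (s + (j : ℝ)) * Real.Gamma x) :=
            mul_le_mul hyn ih' (Real.Gamma_pos_of_pos hypos).le hnpos.le
        _ = (n : ℝ) ^ (s + ((j + 1 : ℕ) : ℝ)) * Real.Gamma x := by
            rw [show s + ((j + 1 : ℕ) : ℝ) = (s + (j : ℝ)) + 1 by push_cast; ring,
              Real.rpow_add_one (ne_of_gt hnpos)]
            ring
  have hmain : Real.Gamma ((n : ℝ) + 1) ≤ (n : ℝ) ^ ρ * Real.Gamma x := by
    have := key k le_rfl
    rwa [show x + (s + (k : ℝ)) = (n : ℝ) + 1 by simp only [hx, hs]; ring,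
      ← hρeq] at this
  -- step 2 : (k+2)^ρ < e^(ρ+1) * Γ(k+2)
  have hΓi : Real.Gamma ((k : ℝ) + 2) = (Nat.factorial (k + 1) : ℝ) := by
    rw [show (k : ℝ) + 2 = ((k + 1 : ℕ) : ℝ) + 1 by push_cast; ring,
      Real.Gamma_nat_eq_factorial]
  have hipos : (0:ℝ) < (k : ℝ) + 2 := by positivity
  have hstep2 : ((k : ℝ) + 2) ^ ρ < Real.exp (ρ + 1) * Real.Gamma ((k : ℝ) + 2) := by
    have hA : ((k : ℝ) + 2) ^ ρ ≤ ((k : ℝ) + 2) ^ ((k + 1 : ℕ) : ℝ) :=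
      Real.rpow_le_rpow_of_exponent_le (by linarith) (by push_cast; linarith)
    rw [Real.rpow_natCast] at hA
    have hk1pos : (0:ℝ) < (k : ℝ) + 1 := by positivity
    have hB : ((k : ℝ) + 2) ^ (k + 1) < Real.exp 1 * ((k : ℝ) + 1) ^ (k + 1) := by
      have h1 : (k : ℝ) + 2 < ((k : ℝ) + 1) * Real.exp (1 / ((k : ℝ) + 1)) := by
        have hne : (1 : ℝ) / ((k : ℝ) + 1) ≠ 0 := by positivity
        have := Real.add_one_lt_exp hne
        calc (k : ℝ) + 2 = ((k : ℝ) + 1) * (1 / ((k : ℝ) + 1) + 1) := by field_simp; ring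
          _ < ((k : ℝ) + 1) * Real.exp (1 / ((k : ℝ) + 1)) := by
              apply mul_lt_mul_of_pos_left this hk1pos
      calc ((k : ℝ) + 2) ^ (k + 1)
          < (((k : ℝ) + 1) * Real.exp (1 / ((k : ℝ) + 1))) ^ (k + 1) := by
            apply pow_lt_pow_left₀ h1 (by positivity)
            exact Nat.succ_ne_zero k
        _ = Real.exp 1 * ((k : ℝ) + 1) ^ (k + 1) := by
            rw [mul_pow, ← Real.exp_nat_mul]
            rw [show ((k + 1 : ℕ) : ℝ) * (1 / ((k : ℝ) + 1)) = 1 by push_cast; field_simp]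
            ring
    have hC : ((k : ℝ) + 1) ^ (k + 1) ≤ Real.exp k * (Nat.factorial (k + 1) : ℝ) := by
      have := fact_lb k
      rwa [show ((k + 1 : ℕ) : ℝ) = (k : ℝ) + 1 by push_cast; ring] at this
    have hD : Real.exp ((k : ℝ) + 1) ≤ Real.exp (ρ + 1) := Real.exp_le_exp.mpr (by linarith)
    calc ((k : ℝ) + 2) ^ ρ ≤ ((k : ℝ) + 2) ^ (k + 1) := hA
      _ < Real.exp 1 * ((k : ℝ) + 1) ^ (k + 1) := hB
      _ ≤ Real.exp 1 * (Real.exp k * (Nat.factorial (k + 1) : ℝ)) := by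
          apply mul_le_mul_of_nonneg_left hC (Real.exp_pos 1).le
      _ = Real.exp ((k : ℝ) + 1) * (Nat.factorial (k + 1) : ℝ) := by rw [Real.exp_add]; ring
      _ ≤ Real.exp (ρ + 1) * (Nat.factorial (k + 1) : ℝ) := by
          apply mul_le_mul_of_nonneg_right hD (by positivity)
      _ = Real.exp (ρ + 1) * Real.Gamma ((k : ℝ) + 2) := by rw [hΓi]
  -- assemble
  have hΓipos : 0 < Real.Gamma ((k : ℝ) + 2) := Real.Gamma_pos_of_pos hipos
  have hΓxpos : 0 < Real.Gamma x := Real.Gamma_pos_of_pos hxpos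
  have hnρpos : (0:ℝ) < (n : ℝ) ^ ρ := Real.rpow_pos_of_pos hnpos ρ
  have hiρpos : (0:ℝ) < ((k : ℝ) + 2) ^ ρ := Real.rpow_pos_of_pos hipos ρ
  have hL : Real.Gamma ((n : ℝ) + 1) / (Real.Gamma ((k : ℝ) + 2) * Real.Gamma x)
      ≤ (n : ℝ) ^ ρ / Real.Gamma ((k : ℝ) + 2) := by
    rw [div_le_div_iff₀ (by positivity) hΓipos]
    calc Real.Gamma ((n : ℝ) + 1) * Real.Gamma ((k : ℝ) + 2)
        ≤ ((n : ℝ) ^ ρ * Real.Gamma x) * Real.Gamma ((k : ℝ) + 2) :=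
          mul_le_mul_of_nonneg_right hmain hΓipos.le
      _ = (n : ℝ) ^ ρ * (Real.Gamma ((k : ℝ) + 2) * Real.Gamma x) := by ring
  have hR : (n : ℝ) ^ ρ / Real.Gamma ((k : ℝ) + 2)
      < Real.exp (ρ + 1) * ((n : ℝ) / ((k : ℝ) + 2)) ^ ρ := by
    have h' : (n : ℝ) ^ ρ / Real.Gamma ((k : ℝ) + 2)
        < (Real.exp (ρ + 1) * (n : ℝ) ^ ρ) / ((k : ℝ) + 2) ^ ρ := by
      rw [div_lt_div_iff₀ hΓipos hiρpos]
      nlinarith [mul_lt_mul_of_pos_left hstep2 hnρpos]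
    have heq : Real.exp (ρ + 1) * ((n : ℝ) / ((k : ℝ) + 2)) ^ ρ
        = (Real.exp (ρ + 1) * (n : ℝ) ^ ρ) / ((k : ℝ) + 2) ^ ρ := by
      rw [Real.div_rpow hnpos.le hipos.le]; ring
    rw [heq]; exact h'
  exact lt_of_le_of_lt hL hR
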